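/- Let B : [0,1) → ℝ be given by B(r) = M/(1-r)^α + g(r) with M > 0, 0 < α ≤ 2, g bounded measurable, and suppose inf_{r∈[0,1)} B(r) > 0. Define Φ(r) = ∫₀^r s·B(s) ds. Then there exists a constant C̃ > 0 (depending only on B) such that r·B(r) ≥ C̃·Φ(r)² for all r ∈ [0,1). -/

import Mathlib

open MeasureTheory Real Set

/-- Lemma 3.1: for a radial magnetic field `B(r) = M/(1-r)^α + g(r)` on the unit disk
with `0 < α ≤ 2`, `M > 0`, `g` bounded measurable and `inf B > 0`, the flux
`Φ(r) = ∫₀^r s B(s) ds` satisfies `Φ'(r) = r B(r) ≥ C̃ Φ(r)²`. -/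
theorem stmt_0 (B g : ℝ → ℝ) (M α : ℝ) (hM : 0 < M) (hα0 : 0 < α) (hα2 : α ≤ 2)
    (hgmeas : Measurable g) (hgbd : ∃ K, ∀ r, |g r| ≤ K)
    (hB : ∀ r ∈ Set.Ico (0:ℝ) 1, B r = M / (1 - r) ^ α + g r)
    (hinf : ∃ β > 0, ∀ r ∈ Set.Ico (0:ℝ) 1, β ≤ B r)
    (Φ : ℝ → ℝ) (hΦ : ∀ r, Φ r = ∫ s in (0:ℝ)..r, s * B s) :
    ∃ C > 0, ∀ r ∈ Set.Ico (0:ℝ) 1, C * (Φ r) ^ 2 ≤ r * B r := by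
  obtain ⟨K₀, hK₀⟩ := hgbd
  obtain ⟨β, hβpos, hβ⟩ := hinf
  set K : ℝ := max K₀ 0 with hKdef
  have hK : ∀ r, |g r| ≤ K := fun r => (hK₀ r).trans (le_max_left _ _)
  have hK0 : (0:ℝ) ≤ K := le_max_right _ _
  -- pointwise upper bound on the integrand
  have hBub : ∀ r ∈ Set.Ico (0:ℝ) 1, B r ≤ M * (1 - r) ^ (-α) + K := by
    intro r hr
    have h1r : (0:ℝ) < 1 - r := by linarith [hr.2]
    have hg' : g r ≤ K := (abs_le.1 (hK r)).2
    rw [hB r hr, Real.rpow_neg h1r.le, ← div_eq_mul_inv]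
    linarith
  have hBpos : ∀ r ∈ Set.Ico (0:ℝ) 1, 0 < B r := fun r hr => lt_of_lt_of_le hβpos (hβ r hr)
  -- integrand bound on subintervals
  have hpt : ∀ r ∈ Set.Ico (0:ℝ) 1, ∀ s ∈ Set.Icc (0:ℝ) r, s * B s ≤ (M + K) * (1 - s) ^ (-α) := by
    intro r hr s hs
    have hs1 : s ∈ Set.Ico (0:ℝ) 1 := ⟨hs.1, lt_of_le_of_lt hs.2 hr.2⟩
    have h1s : (0:ℝ) < 1 - s := by linarith [hs1.2]
    have h1 : (1:ℝ) ≤ (1 - s) ^ (-α) :=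
      Real.one_le_rpow_of_pos_of_le_one_of_nonpos h1s (by linarith [hs1.1]) (by linarith)
    have h2 : s * B s ≤ 1 * B s :=
      mul_le_mul_of_nonneg_right (le_of_lt hs1.2) (hBpos s hs1).le
    have h3 : B s ≤ M * (1 - s) ^ (-α) + K := hBub s hs1
    nlinarith [hBpos s hs1]
  -- integrability of the integrand
  have hint : ∀ r ∈ Set.Ico (0:ℝ) 1, IntervalIntegrable (fun s => s * B s) volume 0 r := by
    intro r hr
    have h1r : (0:ℝ) < 1 - r := by linarith [hr.2]
    have hIoc : Set.uIoc (0:ℝ) r = Set.Ioc 0 r := Set.uIoc_of_le hr.1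
    have hFmeas : Measurable fun s : ℝ => s * (M / (1 - s) ^ α + g s) := by
      fun_prop
    have heq : ∀ s ∈ Set.Ioc (0:ℝ) r, (fun s : ℝ => s * (M / (1 - s) ^ α + g s)) s
        = s * B s := by
      intro s hs
      rw [hB s ⟨hs.1.le, lt_of_le_of_lt hs.2 hr.2⟩]
    apply IntervalIntegrable.mono_fun' (g := fun _ => (M + K) * (1 - r) ^ (-α))
      intervalIntegrable_const
    · apply hFmeas.aestronglyMeasurable.restrict.congr
      rw [hIoc]
      exact (ae_restrict_iff' measurableSet_Ioc).2 (Filter.Eventually.of_forall heq)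
    · rw [hIoc]
      apply (ae_restrict_iff' measurableSet_Ioc).2
      apply Filter.Eventually.of_forall
      intro s hs
      have hs1 : s ∈ Set.Ico (0:ℝ) 1 := ⟨hs.1.le, lt_of_le_of_lt hs.2 hr.2⟩
      have h1s : (0:ℝ) < 1 - s := by linarith [hs1.2]
      have hb := hpt r hr s ⟨hs.1.le, hs.2⟩
      have hmono : (1 - s) ^ (-α) ≤ (1 - r) ^ (-α) :=
        Real.rpow_le_rpow_of_nonpos h1r (by linarith [hs.2]) (by linarith)
      have hnn : 0 ≤ s * B s := mul_nonneg hs.1.le (hBpos s hs1).le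
      show ‖s * B s‖ ≤ (M + K) * (1 - r) ^ (-α)
      rw [Real.norm_eq_abs, abs_of_nonneg hnn]
      calc s * B s ≤ (M + K) * (1 - s) ^ (-α) := hb
        _ ≤ (M + K) * (1 - r) ^ (-α) := by
            apply mul_le_mul_of_nonneg_left hmono (by linarith)
  -- nonnegativity of Φ
  have hΦnn : ∀ r ∈ Set.Ico (0:ℝ) 1, 0 ≤ Φ r := by
    intro r hr
    rw [hΦ]
    apply intervalIntegral.integral_nonneg hr.1
    intro s hs
    exact mul_nonneg hs.1 (hBpos s ⟨hs.1, lt_of_le_of_lt hs.2 hr.2⟩).le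
  -- integrability and continuity of the comparison rpow functions
  have hcont : ∀ q : ℝ, ∀ r ∈ Set.Ico (0:ℝ) 1,
      IntervalIntegrable (fun s : ℝ => (1 - s) ^ (-q)) volume 0 r := by
    intro q r hr
    apply ContinuousOn.intervalIntegrable
    apply ContinuousOn.rpow_const
    · exact continuousOn_const.sub continuousOn_id
    · intro s hs
      left
      rw [Set.uIcc_of_le hr.1] at hs
      have : s < 1 := lt_of_le_of_lt hs.2 hr.2
      intro h; linarith [sub_eq_zero.1 h]
  -- value of the comparison integral
  have hIval : ∀ q : ℝ, q ≠ 1 → ∀ r ∈ Set.Ico (0:ℝ) 1,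
      (-1 < -q ∨ -q ≠ -1 ∧ (0:ℝ) ∉ Set.uIcc (1 - r) 1) →
      ∫ s in (0:ℝ)..r, (1 - s) ^ (-q) = (1 - (1 - r) ^ (1 - q)) / (1 - q) := by
    intro q hq r hr hcase
    have h1r : (0:ℝ) < 1 - r := by linarith [hr.2]
    have : (∫ s in (0:ℝ)..r, (1 - s) ^ (-q))
        = ∫ x in (1 - r)..(1 - 0), (fun x : ℝ => x ^ (-q)) x := by
      rw [← intervalIntegral.integral_comp_sub_left (fun x : ℝ => x ^ (-q)) 1]
    rw [this]
    rw [sub_zero, integral_rpow hcase, Real.one_rpow]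
    have : -q + 1 = 1 - q := by ring
    rw [this]
  -- the key upper bound Φ r ≤ C₁ (1-r)^(-α/2)
  have hΦub : ∃ C₁ > 0, ∀ r ∈ Set.Ico (0:ℝ) 1, Φ r ≤ C₁ * (1 - r) ^ (-(α/2)) := by
    rcases hα2.lt_or_eq with hαlt | hαeq
    · -- α < 2
      have hden : (0:ℝ) < 1 - α/2 := by linarith
      refine ⟨(M + K) * (2 / (2 - α)),
        mul_pos (by linarith) (div_pos two_pos (by linarith)), fun r hr => ?_⟩
      have h1r : (0:ℝ) < 1 - r := by linarith [hr.2]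
      have hq : α/2 ≠ 1 := by intro h; rw [h] at hden; norm_num at hden
      have hval := hIval (α/2) hq r hr (Or.inl (by linarith))
      have hptr : ∀ s ∈ Set.Icc (0:ℝ) r,
          s * B s ≤ ((M+K) * (1-r) ^ (-(α/2))) * (1-s) ^ (-(α/2)) := by
        intro s hs
        have hs1 : s ∈ Set.Ico (0:ℝ) 1 := ⟨hs.1, lt_of_le_of_lt hs.2 hr.2⟩
        have h1s : (0:ℝ) < 1 - s := by linarith [hs1.2]
        have key : (1-s) ^ (-α) = (1-s) ^ (-(α/2)) * (1-s) ^ (-(α/2)) := by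
          rw [← Real.rpow_add h1s]; ring_nf
        have hmono : (1-s) ^ (-(α/2)) ≤ (1-r) ^ (-(α/2)) :=
          Real.rpow_le_rpow_of_nonpos h1r (by linarith [hs.2]) (by linarith)
        calc s * B s ≤ (M+K) * (1-s) ^ (-α) := hpt r hr s hs
          _ = (M+K) * ((1-s) ^ (-(α/2)) * (1-s) ^ (-(α/2))) := by rw [key]
          _ ≤ (M+K) * ((1-r) ^ (-(α/2)) * (1-s) ^ (-(α/2))) := by
              apply mul_le_mul_of_nonneg_left
                (mul_le_mul_of_nonneg_right hmono (Real.rpow_nonneg h1s.le _)) (by linarith)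
          _ = ((M+K) * (1-r) ^ (-(α/2))) * (1-s) ^ (-(α/2)) := by ring
      have hintval : (∫ s in (0:ℝ)..r, ((M+K) * (1-r) ^ (-(α/2))) * (1-s) ^ (-(α/2)))
          = ((M+K) * (1-r) ^ (-(α/2))) * ((1 - (1 - r) ^ (1 - α/2)) / (1 - α/2)) := by
        rw [intervalIntegral.integral_const_mul, hval]
      have hIb : (1 - (1 - r) ^ (1 - α/2)) / (1 - α/2) ≤ 2 / (2 - α) := by
        have h2 : (2:ℝ) / (2 - α) = 1 / (1 - α/2) := by
          rw [div_eq_div_iff (by linarith) (by linarith)]; ring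
        rw [h2, div_le_div_iff₀ (by linarith) (by linarith)]
        nlinarith [Real.rpow_nonneg h1r.le (1 - α/2)]
      rw [hΦ]
      calc (∫ s in (0:ℝ)..r, s * B s)
          ≤ ∫ s in (0:ℝ)..r, ((M+K) * (1-r) ^ (-(α/2))) * (1-s) ^ (-(α/2)) :=
            intervalIntegral.integral_mono_on hr.1 (hint r hr)
              ((hcont (α/2) r hr).const_mul _) hptr
        _ = ((M+K) * (1-r) ^ (-(α/2))) * ((1 - (1 - r) ^ (1 - α/2)) / (1 - α/2)) := hintval
        _ ≤ ((M+K) * (1-r) ^ (-(α/2))) * (2 / (2 - α)) := by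
            apply mul_le_mul_of_nonneg_left hIb
              (mul_nonneg (by linarith) (Real.rpow_nonneg h1r.le _))
        _ = ((M + K) * (2 / (2 - α))) * (1 - r) ^ (-(α/2)) := by ring
    · -- α = 2
      subst hαeq
      refine ⟨M + K, by positivity, fun r hr => ?_⟩
      have h1r : (0:ℝ) < 1 - r := by linarith [hr.2]
      have hcase : (-1 < -(2:ℝ)) ∨ (-(2:ℝ) ≠ -1 ∧ (0:ℝ) ∉ Set.uIcc (1 - r) 1) := by
        right
        constructor
        · norm_num
        · rw [Set.uIcc_of_le (by linarith [hr.1] : 1 - r ≤ 1)]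
          intro h
          exact absurd h.1 (by linarith)
      have hval := hIval 2 (by norm_num) r hr hcase
      have hptr : ∀ s ∈ Set.Icc (0:ℝ) r, s * B s ≤ (M+K) * (1-s) ^ (-(2:ℝ)) :=
        fun s hs => hpt r hr s hs
      have hexp : -((2:ℝ)/2) = -1 := by norm_num
      rw [hΦ, hexp]
      calc (∫ s in (0:ℝ)..r, s * B s)
          ≤ ∫ s in (0:ℝ)..r, (M+K) * (1-s) ^ (-(2:ℝ)) :=
            intervalIntegral.integral_mono_on hr.1 (hint r hr)
              ((hcont 2 r hr).const_mul _) hptr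
        _ = (M+K) * ((1 - (1 - r) ^ (1 - (2:ℝ))) / (1 - 2)) := by
            rw [intervalIntegral.integral_const_mul, hval]
        _ ≤ (M + K) * (1 - r) ^ (-(1:ℝ)) := by
            have h1 : (1:ℝ) - 2 = -1 := by norm_num
            have h2 : (1 - (1 - r) ^ (-(1:ℝ))) / (-1 : ℝ) = (1 - r) ^ (-(1:ℝ)) - 1 := by
              ring
            rw [h1, h2]
            have h3 : (0:ℝ) ≤ (1 - r) ^ (-(1:ℝ)) := Real.rpow_nonneg h1r.le _
            nlinarith
  -- lower bound on B
  have hBlow : ∀ r ∈ Set.Ico (0:ℝ) 1, β / (β + K) * (M * (1 - r) ^ (-α)) ≤ B r := by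
    intro r hr
    have h1r : (0:ℝ) < 1 - r := by linarith [hr.2]
    have hβK : (0:ℝ) < β + K := by linarith
    have hg' : -K ≤ g r := (abs_le.1 (hK r)).1
    have e1 : M * (1 - r) ^ (-α) - K ≤ B r := by
      rw [hB r hr, Real.rpow_neg h1r.le, ← div_eq_mul_inv]
      linarith
    have e2 : β ≤ B r := hβ r hr
    have ht0 : 0 < β / (β + K) := div_pos hβpos hβK
    have ht1 : β / (β + K) ≤ 1 := (div_le_one hβK).2 (by linarith)
    have htid : β / (β + K) * (β + K) = β := div_mul_cancel₀ _ hβK.ne'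
    nlinarith [mul_le_mul_of_nonneg_left e1 ht0.le,
      mul_le_mul_of_nonneg_left e2 (by linarith : (0:ℝ) ≤ 1 - β / (β + K))]
  -- small-r bound on Φ
  have hΦsmall : ∀ r ∈ Set.Ico (0:ℝ) 1, r ≤ 1/2 → Φ r ≤ r * (4*M + K) := by
    intro r hr hr2
    rw [hΦ]
    have hb : ∀ s ∈ Set.Icc (0:ℝ) r, s * B s ≤ 4*M + K := by
      intro s hs
      have hs1 : s ∈ Set.Ico (0:ℝ) 1 := ⟨hs.1, lt_of_le_of_lt hs.2 hr.2⟩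
      have h1s : (1:ℝ)/2 ≤ 1 - s := by linarith [hs.2]
      have hrp : (1-s) ^ (-α) ≤ 4 := by
        calc (1-s) ^ (-α) ≤ ((1:ℝ)/2) ^ (-α) :=
              Real.rpow_le_rpow_of_nonpos (by norm_num) h1s (by linarith)
          _ ≤ ((1:ℝ)/2) ^ (-(2:ℝ)) :=
              Real.rpow_le_rpow_of_exponent_ge (by norm_num) (by norm_num) (by linarith)
          _ = 4 := by
              rw [Real.rpow_neg (by norm_num), show (2:ℝ) = ((2:ℕ):ℝ) by norm_num,
                Real.rpow_natCast]
              norm_num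
      have h2 : s * B s ≤ 1 * B s :=
        mul_le_mul_of_nonneg_right (by linarith [hs.2]) (hBpos s hs1).le
      have h3 : B s ≤ M * (1-s) ^ (-α) + K := hBub s hs1
      nlinarith
    calc (∫ s in (0:ℝ)..r, s * B s)
        ≤ ∫ _s in (0:ℝ)..r, (4*M + K) :=
          intervalIntegral.integral_mono_on hr.1 (hint r hr) intervalIntegrable_const hb
      _ = r * (4*M + K) := by simp; ring
  obtain ⟨C₁, hC₁pos, hC₁⟩ := hΦub
  have hMK : (0:ℝ) < 4*M + K := by linarith
  refine ⟨min (β / (4*M + K)^2) (β / (β + K) * M / (2 * C₁^2)),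
    lt_min (by positivity) (by positivity), fun r hr => ?_⟩
  have h1r : (0:ℝ) < 1 - r := by linarith [hr.2]
  rcases le_or_gt r (1/2) with hhalf | hhalf
  · -- small r
    have h1 : Φ r ≤ r * (4*M + K) := hΦsmall r hr hhalf
    have h0 : 0 ≤ Φ r := hΦnn r hr
    have h2 : Φ r ^ 2 ≤ (r * (4*M + K))^2 := by nlinarith
    have h3 : (r * (4*M + K))^2 ≤ r * (4*M + K)^2 := by nlinarith [hr.1, hr.2.le]
    have h4 : β * r ≤ r * B r := by
      have := hβ r hr
      nlinarith [hr.1]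
    calc min (β / (4*M + K)^2) (β / (β + K) * M / (2 * C₁^2)) * Φ r ^ 2
        ≤ β / (4*M + K)^2 * Φ r ^ 2 := by
          apply mul_le_mul_of_nonneg_right (min_le_left _ _) (by positivity)
      _ ≤ β / (4*M + K)^2 * (r * (4*M + K)^2) := by
          apply mul_le_mul_of_nonneg_left (h2.trans h3) (by positivity)
      _ = β * r := by field_simp
      _ ≤ r * B r := h4
  · -- large r
    have h0 : 0 ≤ Φ r := hΦnn r hr
    have h1 : Φ r ≤ C₁ * (1 - r) ^ (-(α/2)) := hC₁ r hr
    have hsq : ((1 - r) ^ (-(α/2)))^2 = (1 - r) ^ (-α) := by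
      rw [← Real.rpow_natCast ((1 - r) ^ (-(α/2))) 2, ← Real.rpow_mul h1r.le]
      norm_num
    have h2 : Φ r ^ 2 ≤ C₁^2 * (1 - r) ^ (-α) := by
      calc Φ r ^ 2 ≤ (C₁ * (1 - r) ^ (-(α/2)))^2 := by nlinarith
        _ = C₁^2 * (1 - r) ^ (-α) := by rw [mul_pow, hsq]
    have h3 : (1/2 : ℝ) * (β / (β + K) * (M * (1 - r) ^ (-α))) ≤ r * B r := by
      have hb := hBlow r hr
      have hBr := (hBpos r hr).le
      nlinarith [hhalf.le]
    calc min (β / (4*M + K)^2) (β / (β + K) * M / (2 * C₁^2)) * Φ r ^ 2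
        ≤ β / (β + K) * M / (2 * C₁^2) * Φ r ^ 2 := by
          apply mul_le_mul_of_nonneg_right (min_le_right _ _) (by positivity)
      _ ≤ β / (β + K) * M / (2 * C₁^2) * (C₁^2 * (1 - r) ^ (-α)) := by
          apply mul_le_mul_of_nonneg_left h2 (by positivity)
      _ = (1/2 : ℝ) * (β / (β + K) * (M * (1 - r) ^ (-α))) := by
          field_simp
      _ ≤ r * B r := h3
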